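/- There exists a constant K > 0 such that the following holds for all real Λ ≥ 2, λ > 0, and h with |h| ≤ 1. Let B = [-1/2, 1/2] × [-1/2, 1/2] ⊆ ℝ², let α = (1,1), let o = (0,0), and let d = (Λ, Λ + h). Let ô = (Λ+λ, (Λ+λ)(Λ+h)/Λ) (the intersection of the ray from o through d with the vertical line x = Λ+λ), and let B̂ be the axis-parallel square with center ô and side length λ/Λ. For a point p ∈ B, define p̂ = ô - (λ/Λ)·p (scalar multiple of p as a vector, subtracted from ô). Then for every p ∈ B, every point z that lies both on the ray from p through d and in B̂ satisfies: the distance from z to the line through p̂ with direction α is at most K·λ/Λ². -/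

import Mathlib

/-- A point of the Euclidean plane with given coordinates. -/
noncomputable def pt (a b : ℝ) : EuclideanSpace ℝ (Fin 2) :=
  (WithLp.equiv 2 (Fin 2 → ℝ)).symm ![a, b]

set_option maxHeartbeats 1000000 in
/-- The projection lemma (Lemma 3.4 / lemma:proj): there is a universal constant `K > 0`
such that for all `Λ ≥ 2`, `λ > 0`, `|h| ≤ 1`, every point `p` in the unit square `B`
centered at the origin, and every point `z` lying both on the ray from `p` through
`d = (Λ, Λ + h)` and in the axis-parallel square `B̂` of side `λ/Λ` centered at
`ô = (Λ+λ, (Λ+λ)(Λ+h)/Λ)`, the Euclidean distance from `z` to the line through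
`p̂ = ô - (λ/Λ)·p` with direction `α = (1,1)` is at most `K·λ/Λ²`. -/
theorem projection_lemma :
    ∃ K : ℝ, 0 < K ∧
      ∀ (Λ lam h : ℝ), 2 ≤ Λ → 0 < lam → |h| ≤ 1 →
        ∀ p : EuclideanSpace ℝ (Fin 2),
          p 0 ∈ Set.Icc (-(1/2) : ℝ) (1/2) → p 1 ∈ Set.Icc (-(1/2) : ℝ) (1/2) →
        ∀ z : EuclideanSpace ℝ (Fin 2),
          (∃ t : ℝ, 0 ≤ t ∧ z = p + t • (pt Λ (Λ + h) - p)) →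
          |z 0 - (Λ + lam)| ≤ lam / Λ / 2 →
          |z 1 - (Λ + lam) * (Λ + h) / Λ| ≤ lam / Λ / 2 →
          Metric.infDist z
            {w : EuclideanSpace ℝ (Fin 2) | ∃ t : ℝ,
              w = (pt (Λ + lam) ((Λ + lam) * (Λ + h) / Λ) - (lam / Λ) • p) + t • pt 1 1}
            ≤ K * lam / Λ ^ 2 := by
  refine ⟨4, by norm_num, ?_⟩
  intro Λ lam h hΛ hlam hh p hp0 hp1 z hz hz0 hz1
  obtain ⟨t, ht, hzeq⟩ := hz
  have hΛ0 : (0:ℝ) < Λ := by linarith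
  obtain ⟨hp0l, hp0r⟩ := hp0
  obtain ⟨hp1l, hp1r⟩ := hp1
  -- coordinates of z
  have hc0 : z 0 = p 0 + t * (Λ - p 0) := by
    rw [hzeq]
    simp [pt, PiLp.add_apply, PiLp.smul_apply, PiLp.sub_apply,
      WithLp.equiv_symm_apply, PiLp.toLp_apply]
  have hc1 : z 1 = p 1 + t * (Λ + h - p 1) := by
    rw [hzeq]
    simp [pt, PiLp.add_apply, PiLp.smul_apply, PiLp.sub_apply,
      WithLp.equiv_symm_apply, PiLp.toLp_apply]
  -- choose the point on the line with matching first coordinate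
  set t₀ : ℝ := z 0 - ((Λ + lam) - (lam / Λ) * p 0) with ht₀
  set w : EuclideanSpace ℝ (Fin 2) :=
    (pt (Λ + lam) ((Λ + lam) * (Λ + h) / Λ) - (lam / Λ) • p) + t₀ • pt 1 1 with hw
  have hwmem : w ∈ {w : EuclideanSpace ℝ (Fin 2) | ∃ t : ℝ,
      w = (pt (Λ + lam) ((Λ + lam) * (Λ + h) / Λ) - (lam / Λ) • p) + t • pt 1 1} :=
    ⟨t₀, rfl⟩
  have hw0 : w 0 = (Λ + lam) - (lam / Λ) * p 0 + t₀ := by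
    rw [hw]
    simp [pt, PiLp.add_apply, PiLp.smul_apply, PiLp.sub_apply,
      WithLp.equiv_symm_apply, PiLp.toLp_apply]
  have hw1 : w 1 = (Λ + lam) * (Λ + h) / Λ - (lam / Λ) * p 1 + t₀ := by
    rw [hw]
    simp [pt, PiLp.add_apply, PiLp.smul_apply, PiLp.sub_apply,
      WithLp.equiv_symm_apply, PiLp.toLp_apply]
  -- the key algebra: with τ = t - 1 - lam/Λ
  set τ : ℝ := t - 1 - lam / Λ with hτ
  have key0 : τ * (Λ - p 0) = (z 0 - (Λ + lam)) + (lam / Λ) * p 0 := by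
    rw [hc0, hτ]; field_simp; ring
  have key1 : z 1 - w 1 = τ * (h + p 0 - p 1) := by
    rw [hw1, ht₀, hc0, hc1, hτ]; field_simp; ring
  -- bound |τ| * (Λ - p 0)
  have hτb : |τ| * (Λ - p 0) ≤ lam / Λ := by
    have h1 : |τ * (Λ - p 0)| ≤ lam / Λ := by
      rw [key0]
      calc |(z 0 - (Λ + lam)) + (lam / Λ) * p 0|
          ≤ |z 0 - (Λ + lam)| + |(lam / Λ) * p 0| := abs_add_le _ _
        _ ≤ lam / Λ / 2 + lam / Λ / 2 := by
            refine add_le_add hz0 ?_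
            rw [abs_mul, abs_of_pos (div_pos hlam hΛ0)]
            have : |p 0| ≤ 1/2 := abs_le.mpr ⟨by linarith, hp0r⟩
            nlinarith [div_pos hlam hΛ0]
        _ = lam / Λ := by ring
    have h2 : (0:ℝ) < Λ - p 0 := by linarith
    rwa [abs_mul, abs_of_pos h2] at h1
  -- bound |z 1 - w 1|
  have hzw : |z 1 - w 1| ≤ 4 * lam / Λ ^ 2 := by
    rw [key1, abs_mul]
    have h3 : |h + p 0 - p 1| ≤ 2 := by
      have := abs_le.mp hh
      have : |h + p 0 - p 1| ≤ |h| + |p 0| + |p 1| := by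
        calc |h + p 0 - p 1| ≤ |h + p 0| + |p 1| := abs_sub _ _
          _ ≤ |h| + |p 0| + |p 1| := by linarith [abs_add_le h (p 0)]
      have hq0 : |p 0| ≤ 1/2 := abs_le.mpr ⟨by linarith, hp0r⟩
      have hq1 : |p 1| ≤ 1/2 := abs_le.mpr ⟨by linarith, hp1r⟩
      linarith
    have h4 : (0:ℝ) < Λ - p 0 := by linarith
    have h5 : Λ / 2 ≤ Λ - p 0 := by linarith
    have h6 : |τ| * Λ ≤ 2 * (lam / Λ) := by
      nlinarith [abs_nonneg τ]
    have h7 : |τ| * |h + p 0 - p 1| ≤ |τ| * 2 := by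
      exact mul_le_mul_of_nonneg_left h3 (abs_nonneg τ)
    have hτ2 : |τ| ≤ 2 * lam / Λ ^ 2 := by
      rw [le_div_iff₀ (by positivity : (0:ℝ) < Λ ^ 2)]
      nlinarith
    calc |τ| * |h + p 0 - p 1| ≤ |τ| * 2 := h7
      _ ≤ (2 * lam / Λ ^ 2) * 2 := by nlinarith
      _ = 4 * lam / Λ ^ 2 := by ring
  -- conclude
  have hdist : dist z w = |z 1 - w 1| := by
    rw [EuclideanSpace.dist_eq]
    have e0 : z 0 - w 0 = 0 := by rw [hw0, ht₀]; ring
    rw [Fin.sum_univ_two]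
    simp [Real.dist_eq, e0, Real.sqrt_sq_eq_abs]
  calc Metric.infDist z _ ≤ dist z w := Metric.infDist_le_dist_of_mem hwmem
    _ = |z 1 - w 1| := hdist
    _ ≤ 4 * lam / Λ ^ 2 := hzw
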